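/- In the two-agent, five-identical-items instance where both agents have the same monotone valuation v with v(0)=0, v(1)=1, v(2)=1, v(3)=√N, v(4)=N, v(5)=N (value depends only on the number of items received), every partial allocation that is (2/√N)-EFX has Nash welfare at most √(√N), while the maximum Nash welfare is at least √N. Hence the MNW approximation ratio of any (2/√N)-EFX allocation is at most N^{-1/4}. -/
import Mathlib


open Finset

/-- Impossibility for general monotone valuations: two identical agents, five identical
items, with `v(S) = f(|S|)`, `f 0 = 0`, `f 1 = f 2 = 1`, `f 3 = √N`, `f 4 = f 5 = N`.
Every partial `(2/√N)`-EFX allocation has Nash welfare at most `√(√N)`, while the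
maximum Nash welfare is at least `√N`. -/
theorem stmt_1 (N : ℝ) (hN : 1 < N)
    (f : ℕ → ℝ) (hf0 : f 0 = 0) (hf1 : f 1 = 1) (hf2 : f 2 = 1)
    (hf3 : f 3 = Real.sqrt N) (hf4 : f 4 = N) (hf5 : f 5 = N)
    (hmono : Monotone f)
    (v : Finset (Fin 5) → ℝ) (hv : ∀ S, v S = f S.card) :
    (∀ Z : Fin 2 → Finset (Fin 5),
      (∀ i j, i ≠ j → Disjoint (Z i) (Z j)) →
      (∀ i j, ∀ g ∈ Z j, v (Z i) ≥ (2 / Real.sqrt N) * v ((Z j).erase g)) →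
      Real.sqrt (v (Z 0) * v (Z 1)) ≤ Real.sqrt (Real.sqrt N))
    ∧ (∃ X : Fin 2 → Finset (Fin 5),
      (∀ i j, i ≠ j → Disjoint (X i) (X j)) ∧ X 0 ∪ X 1 = Finset.univ ∧
      Real.sqrt (v (X 0) * v (X 1)) ≥ Real.sqrt N) := by
  have hN0 : (0:ℝ) < N := by linarith
  have hs1 : 1 < Real.sqrt N := by
    have : Real.sqrt 1 < Real.sqrt N := Real.sqrt_lt_sqrt (by norm_num) hN
    simpa using this
  have hs0 : 0 < Real.sqrt N := by linarith
  have hsq : Real.sqrt N * Real.sqrt N = N := Real.mul_self_sqrt (le_of_lt hN0)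
  constructor
  · intro Z hdisj hEFX
    have hno14 : ∀ i j : Fin 2, i ≠ j → ¬((Z i).card = 1 ∧ (Z j).card = 4) := by
      rintro i j hij ⟨hi, hj⟩
      obtain ⟨g, hg⟩ : (Z j).Nonempty := card_pos.mp (by omega)
      have h := hEFX i j g hg
      rw [hv, hv, hi, card_erase_of_mem hg, hj] at h
      norm_num [hf1, hf3] at h
      rw [div_mul_cancel₀ _ (ne_of_gt hs0)] at h
      linarith
    have hcard : (Z 0).card + (Z 1).card ≤ 5 := by
      have hd := hdisj 0 1 (by decide)
      calc (Z 0).card + (Z 1).card = (Z 0 ∪ Z 1).card := (card_union_of_disjoint hd).symm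
        _ ≤ Fintype.card (Fin 5) := card_le_univ _
        _ = 5 := by simp
    have h01 := hno14 0 1 (by decide)
    have h10 := hno14 1 0 (by decide)
    have key : v (Z 0) * v (Z 1) ≤ Real.sqrt N := by
      rw [hv, hv]
      set a := (Z 0).card with ha
      set b := (Z 1).card with hb
      have ha5 : a ≤ 5 := by omega
      have hb5 : b ≤ 5 := by omega
      interval_cases a <;> interval_cases b <;>
        first
          | omega
          | (simp only [hf0, hf1, hf2, hf3, hf4, hf5, zero_mul, mul_zero, one_mul, mul_one]; linarith [hs0, hs1])
    exact Real.sqrt_le_sqrt key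
  · refine ⟨![{0}, {1, 2, 3, 4}], ?_, ?_, ?_⟩
    · intro i j hij
      fin_cases i <;> fin_cases j <;> simp_all <;> decide
    · decide
    · have h0 : v ({0} : Finset (Fin 5)) = 1 := by
        rw [hv]; norm_num [hf1]
      have h1 : v ({1, 2, 3, 4} : Finset (Fin 5)) = N := by
        rw [hv]
        have : ({1, 2, 3, 4} : Finset (Fin 5)).card = 4 := by decide
        rw [this, hf4]
      simp only [Matrix.cons_val_zero, Matrix.cons_val_one, Matrix.head_cons, h0, h1, one_mul]
      exact le_refl _
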